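/- Let m, λ, ħ, I₀, ω₀, L, γ be positive reals, 0 < ρ < 1, and φ, ζ ∈ ℝ; set t := √(1 − ρ²), D := 1 + 2ρ·cos(2φ) + ρ², Ω± := (±2ργ·sin(2φ) − iγ(1 − ρ²))/D, and define R_xx(Ω) := −4/(m·Ω²), R^C_xx(Ω) := −4/(m·(Ω + iλ)²), and R_ZF(Ω) := i·√(2 I₀ ω₀/(ħ L²))·(t/D)·[(Ω + iγ)·cos(φ + ζ) + ρ·(Ω − iγ)·cos(φ − ζ)]/((Ω − Ω₊)·(Ω − Ω₋)). Then for every Ω ∈ ℂ with Ω ≠ 0, Ω ≠ −iλ, Ω ∉ {Ω₊, Ω₋}, and (Ω + iγ)·cos(φ + ζ) + ρ·(Ω − iγ)·cos(φ − ζ) ≠ 0, the control kernel K_C(Ω) := (1/R_ZF(Ω))·(1/R_xx(Ω) − 1/R^C_xx(Ω)) equals (m·λ/(2t))·√(ħ L²/(2 I₀ ω₀))·(Ω + iλ/2)·D·(Ω − Ω₋)·(Ω − Ω₊)/[(Ω + iγ)·cos(φ + ζ) + ρ·(Ω − iγ)·cos(φ − ζ)]. -/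

import Mathlib

set_option maxHeartbeats 1000000 in
/-- Explicit form (Eq. 3.19) of the feed-back control kernel
`K_C(Ω) = (1/R_ZF)(1/R_xx - 1/R^C_xx)` which converts the free antisymmetric mirror
mode into an effectively damped oscillator with double pole at `Ω = -iλ`. -/
theorem control_kernel_explicit_form
    (m lam hbar I₀ ω₀ L γ ρ φ ζ : ℝ)
    (hm : 0 < m) (hlam : 0 < lam) (hhb : 0 < hbar) (hI : 0 < I₀) (hω : 0 < ω₀)
    (hL : 0 < L) (hγ : 0 < γ) (hρ0 : 0 < ρ) (hρ1 : ρ < 1)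
    (t : ℝ) (ht : t = Real.sqrt (1 - ρ ^ 2))
    (D : ℝ) (hD : D = 1 + 2 * ρ * Real.cos (2 * φ) + ρ ^ 2)
    (Ωp Ωm : ℂ)
    (hp : Ωp = (((2 * ρ * γ * Real.sin (2 * φ) : ℝ) : ℂ)
          - Complex.I * (γ : ℂ) * ((1 - ρ ^ 2 : ℝ) : ℂ)) / ((D : ℝ) : ℂ))
    (hm' : Ωm = (((-(2 * ρ * γ * Real.sin (2 * φ)) : ℝ) : ℂ)
          - Complex.I * (γ : ℂ) * ((1 - ρ ^ 2 : ℝ) : ℂ)) / ((D : ℝ) : ℂ))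
    (Rxx RCxx RZF : ℂ → ℂ)
    (hRxx : ∀ Ω : ℂ, Rxx Ω = -4 / ((m : ℂ) * Ω ^ 2))
    (hRCxx : ∀ Ω : ℂ, RCxx Ω = -4 / ((m : ℂ) * (Ω + Complex.I * (lam : ℂ)) ^ 2))
    (hRZF : ∀ Ω : ℂ, RZF Ω = Complex.I * ((Real.sqrt (2 * I₀ * ω₀ / (hbar * L ^ 2)) : ℝ) : ℂ)
        * (((t / D : ℝ) : ℂ))
        * ((Ω + Complex.I * (γ : ℂ)) * ((Real.cos (φ + ζ) : ℝ) : ℂ)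
            + ((ρ : ℝ) : ℂ) * (Ω - Complex.I * (γ : ℂ)) * ((Real.cos (φ - ζ) : ℝ) : ℂ))
        / ((Ω - Ωp) * (Ω - Ωm)))
    (Ω : ℂ)
    (h0 : Ω ≠ 0) (hlam' : Ω ≠ -Complex.I * (lam : ℂ)) (h1 : Ω ≠ Ωp) (h2 : Ω ≠ Ωm)
    (hden : (Ω + Complex.I * (γ : ℂ)) * ((Real.cos (φ + ζ) : ℝ) : ℂ)
        + ((ρ : ℝ) : ℂ) * (Ω - Complex.I * (γ : ℂ)) * ((Real.cos (φ - ζ) : ℝ) : ℂ) ≠ 0)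
    (KC : ℂ)
    (hKC : KC = (1 / RZF Ω) * (1 / Rxx Ω - 1 / RCxx Ω)) :
    KC = ((m * lam / (2 * t) : ℝ) : ℂ) * ((Real.sqrt (hbar * L ^ 2 / (2 * I₀ * ω₀)) : ℝ) : ℂ)
        * (Ω + Complex.I * ((lam : ℝ) : ℂ) / 2)
        * (((D : ℝ) : ℂ) * (Ω - Ωm) * (Ω - Ωp))
        / ((Ω + Complex.I * (γ : ℂ)) * ((Real.cos (φ + ζ) : ℝ) : ℂ)
            + ((ρ : ℝ) : ℂ) * (Ω - Complex.I * (γ : ℂ)) * ((Real.cos (φ - ζ) : ℝ) : ℂ)) := by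
  have hDpos : 0 < D := by
    nlinarith [Real.neg_one_le_cos (2*φ), Real.cos_le_one (2*φ), sq_nonneg (1-ρ), sq_nonneg (1+ρ)]
  have htpos : 0 < t := by
    rw [ht]; apply Real.sqrt_pos.2; nlinarith
  have hx : (0:ℝ) < 2 * I₀ * ω₀ / (hbar * L ^ 2) := by positivity
  have hsqrt : Real.sqrt (hbar * L ^ 2 / (2 * I₀ * ω₀)) =
      (Real.sqrt (2 * I₀ * ω₀ / (hbar * L ^ 2)))⁻¹ := by
    rw [← Real.sqrt_inv]; congr 1; field_simp
  set s := Real.sqrt (2 * I₀ * ω₀ / (hbar * L ^ 2)) with hs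
  have hspos : 0 < s := Real.sqrt_pos.2 hx
  have hsne : (s:ℂ) ≠ 0 := by exact_mod_cast hspos.ne'
  have htne : (t:ℂ) ≠ 0 := by exact_mod_cast htpos.ne'
  have hDne : (D:ℂ) ≠ 0 := by exact_mod_cast hDpos.ne'
  have hmne : (m:ℂ) ≠ 0 := by exact_mod_cast hm.ne'
  have h1' : Ω - Ωp ≠ 0 := sub_ne_zero.2 h1
  have h2' : Ω - Ωm ≠ 0 := sub_ne_zero.2 h2
  have hlamne : Ω + Complex.I * (lam:ℂ) ≠ 0 := by
    intro h; apply hlam'; linear_combination h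
  have e1 : 1 / Rxx Ω - 1 / RCxx Ω
      = (m : ℂ) * Complex.I * (lam : ℂ) / 2 * (Ω + Complex.I * (lam : ℂ) / 2) := by
    rw [hRxx, hRCxx]
    field_simp
    ring
  have e2 : 1 / RZF Ω
      = (Ω - Ωp) * (Ω - Ωm) * (D : ℂ) / (Complex.I * (s : ℂ) * (t : ℂ)
        * ((Ω + Complex.I * (γ : ℂ)) * ((Real.cos (φ + ζ) : ℝ) : ℂ)
          + ((ρ : ℝ) : ℂ) * (Ω - Complex.I * (γ : ℂ)) * ((Real.cos (φ - ζ) : ℝ) : ℂ))) := by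
    rw [hRZF, Complex.ofReal_div]
    field_simp
  rw [hKC, e1, e2, hsqrt]
  simp only [Complex.ofReal_div, Complex.ofReal_mul, Complex.ofReal_inv, Complex.ofReal_ofNat]
  generalize hN : (Ω + Complex.I * (γ : ℂ)) * ((Real.cos (φ + ζ) : ℝ) : ℂ)
      + ((ρ : ℝ) : ℂ) * (Ω - Complex.I * (γ : ℂ)) * ((Real.cos (φ - ζ) : ℝ) : ℂ) = N at hden ⊢
  field_simp [hsne, htne, hDne, hden, Complex.I_ne_zero]
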